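/- Let B ∈ M_{N,h}(ℤ) with rank h, M ∈ M_h(ℝ) invertible, Λ = BMe_1 with Λ ∈ (ℝ_{>0})^N, and n, n_0 ∈ ℕ^N. If Λ·n ≠ Λ·n_0, then (1/(2R)^h) ∫_{[-R,R]^h} e^{i(n-n_0)·BMν} dν → 0 as R → ∞; if Λ·n = Λ·n_0 and in addition n - n_0 ∈ Z(Λ) is orthogonal to range(B), then this average equals 1 for every R > 0. -/

import Mathlib

open Finset MeasureTheory Filter

lemma aux_exp_norm (c t : ℝ) : ‖Complex.exp (Complex.I * (c : ℂ) * (t : ℂ))‖ = 1 := by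
  rw [Complex.norm_exp]
  norm_num [Complex.mul_re]

lemma aux_fact {h : ℕ} (c : Fin h → ℝ) (R : ℝ) :
    (∫ ν in Set.univ.pi (fun _ : Fin h => Set.Icc (-R) R),
      ∏ j, Complex.exp (Complex.I * (c j : ℂ) * (ν j : ℂ)))
    = ∏ j, ∫ t in Set.Icc (-R) R, Complex.exp (Complex.I * (c j : ℂ) * (t : ℂ)) := by
  have hmeas : MeasurableSet (Set.univ.pi (fun _ : Fin h => Set.Icc (-R) R)) :=
    MeasurableSet.univ_pi fun _ => measurableSet_Icc
  rw [← MeasureTheory.integral_indicator hmeas]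
  have key : Set.indicator (Set.univ.pi (fun _ : Fin h => Set.Icc (-R) R))
      (fun ν : Fin h → ℝ => ∏ j, Complex.exp (Complex.I * (c j : ℂ) * (ν j : ℂ)))
      = fun ν => ∏ j, Set.indicator (Set.Icc (-R) R)
          (fun t : ℝ => Complex.exp (Complex.I * (c j : ℂ) * (t : ℂ))) (ν j) := by
    funext ν
    by_cases hν : ν ∈ Set.univ.pi (fun _ : Fin h => Set.Icc (-R) R)
    · rw [Set.indicator_of_mem hν]
      exact Finset.prod_congr rfl fun j _ =>
        (Set.indicator_of_mem (hν j (Set.mem_univ j))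
          (fun t : ℝ => Complex.exp (Complex.I * (c j : ℂ) * (t : ℂ)))).symm
    · rw [Set.indicator_of_notMem hν]
      obtain ⟨j, hj⟩ : ∃ j, ν j ∉ Set.Icc (-R) R := by
        by_contra hcon
        push_neg at hcon
        exact hν fun j _ => hcon j
      exact (Finset.prod_eq_zero (Finset.mem_univ j)
        (Set.indicator_of_notMem hj _)).symm
  rw [key]
  beta_reduce
  rw [MeasureTheory.volume_pi, MeasureTheory.integral_fintype_prod_eq_prod (ι := Fin h)
    (f := fun j (t : ℝ) => Set.indicator (Set.Icc (-R) R)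
      (fun t : ℝ => Complex.exp (Complex.I * (c j : ℂ) * (t : ℂ))) t)]
  exact Finset.prod_congr rfl fun j _ => MeasureTheory.integral_indicator measurableSet_Icc

lemma aux_norm_le (c R : ℝ) (hR : 0 < R) :
    ‖∫ t in Set.Icc (-R) R, Complex.exp (Complex.I * (c : ℂ) * (t : ℂ))‖ ≤ 2 * R := by
  have h1 : ‖∫ t in Set.Icc (-R) R, Complex.exp (Complex.I * (c : ℂ) * (t : ℂ))‖
      ≤ 1 * (volume (Set.Icc (-R) R)).toReal := by
    refine MeasureTheory.norm_setIntegral_le_of_norm_le_const_ae'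
      (by rw [Real.volume_Icc]; exact ENNReal.ofReal_lt_top) ?_
    exact Filter.Eventually.of_forall fun t _ => le_of_eq (aux_exp_norm c t)
  calc _ ≤ 1 * (volume (Set.Icc (-R) R)).toReal := h1
  _ = 2 * R := by
      rw [Real.volume_Icc, one_mul, ENNReal.toReal_ofReal (by linarith)]; ring

lemma aux_norm_le' (c R : ℝ) (hc : c ≠ 0) (hR : 0 < R) :
    ‖∫ t in Set.Icc (-R) R, Complex.exp (Complex.I * (c : ℂ) * (t : ℂ))‖ ≤ 2 / |c| := by
  have hIc : Complex.I * (c : ℂ) ≠ 0 := by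
    simp [Complex.I_ne_zero, hc]
  rw [MeasureTheory.integral_Icc_eq_integral_Ioc,
    ← intervalIntegral.integral_of_le (by linarith : -R ≤ R),
    integral_exp_mul_complex hIc, norm_div]
  have h1 : ‖Complex.I * (c : ℂ)‖ = |c| := by simp
  have h2 : ‖Complex.exp (Complex.I * (c : ℂ) * (R : ℝ))
      - Complex.exp (Complex.I * (c : ℂ) * ((-R : ℝ) : ℂ))‖ ≤ 2 := by
    refine (norm_sub_le _ _).trans ?_
    have e1 := aux_exp_norm c R
    have e2 := aux_exp_norm c (-R)
    push_cast at e2 ⊢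
    rw [e1, e2]; norm_num
  rw [h1]
  gcongr

set_option maxHeartbeats 1000000 in
/-- Averages of oscillating exponentials over hypercubes: with `Λ = BMe₁`,
if `Λ·n ≠ Λ·n₀` the average of `e^{i(n-n₀)·BMν}` over `[-R,R]^h` tends to `0` as `R → ∞`;
if `Λ·n = Λ·n₀` and `n - n₀` is orthogonal to the range of `B`, the average equals `1`
for every `R > 0`. -/
theorem stmt_12 {N h : ℕ} (hh : 0 < h)
    (B : Matrix (Fin N) (Fin h) ℤ)
    (hB : (B.map (fun x : ℤ => (x : ℝ))).rank = h)
    (M : Matrix (Fin h) (Fin h) ℝ) (hM : IsUnit M.det)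
    (Λ : Fin N → ℝ)
    (hΛdef : ∀ i, Λ i = ∑ j, (B i j : ℝ) * M j ⟨0, hh⟩)
    (hΛpos : ∀ i, 0 < Λ i) (n n₀ : Fin N → ℕ) :
    ((∑ i, Λ i * (n i : ℝ)) ≠ (∑ i, Λ i * (n₀ i : ℝ)) →
      Tendsto (fun R : ℝ =>
        ((1 / (2 * R) ^ h : ℝ) : ℂ) *
          ∫ ν in Set.univ.pi (fun _ : Fin h => Set.Icc (-R) R),
            Complex.exp (Complex.I * ((∑ i, ((n i : ℝ) - (n₀ i : ℝ)) *
              ∑ j, ((B.map (fun x : ℤ => (x : ℝ))) * M) i j * ν j : ℝ) : ℂ)))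
        atTop (nhds 0)) ∧
    ((∑ i, Λ i * (n i : ℝ)) = (∑ i, Λ i * (n₀ i : ℝ)) →
      (∀ y : Fin h → ℝ, ∑ i, ((n i : ℝ) - (n₀ i : ℝ)) * (∑ j, (B i j : ℝ) * y j) = 0) →
      ∀ R : ℝ, 0 < R →
        ((1 / (2 * R) ^ h : ℝ) : ℂ) *
          ∫ ν in Set.univ.pi (fun _ : Fin h => Set.Icc (-R) R),
            Complex.exp (Complex.I * ((∑ i, ((n i : ℝ) - (n₀ i : ℝ)) *
              ∑ j, ((B.map (fun x : ℤ => (x : ℝ))) * M) i j * ν j : ℝ) : ℂ)) = 1) := by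
  set A := B.map (fun x : ℤ => (x : ℝ)) * M with hA
  set c : Fin h → ℝ := fun j => ∑ i, ((n i : ℝ) - (n₀ i : ℝ)) * A i j with hcdef
  have hAB : ∀ i j, A i j = ∑ k, (B i k : ℝ) * M k j := by
    intro i j
    rw [hA, Matrix.mul_apply]
    exact Finset.sum_congr rfl fun k _ => by rw [Matrix.map_apply]
  have hAΛ : ∀ i, A i ⟨0, hh⟩ = Λ i := by
    intro i; rw [hAB, hΛdef]
  have hrw : ∀ ν : Fin h → ℝ,
      Complex.exp (Complex.I * ((∑ i, ((n i : ℝ) - (n₀ i : ℝ)) * ∑ j, A i j * ν j : ℝ) : ℂ))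
      = ∏ j, Complex.exp (Complex.I * (c j : ℂ) * (ν j : ℂ)) := by
    intro ν
    have hsum : (∑ i, ((n i : ℝ) - (n₀ i : ℝ)) * ∑ j, A i j * ν j) = ∑ j, c j * ν j := by
      simp_rw [hcdef, Finset.mul_sum, Finset.sum_mul]
      rw [Finset.sum_comm]
      exact Finset.sum_congr rfl fun i _ => Finset.sum_congr rfl fun j _ => by ring
    rw [hsum]
    push_cast
    rw [Finset.mul_sum, Complex.exp_sum]
    exact Finset.prod_congr rfl fun j _ => by rw [← mul_assoc]
  constructor
  · intro hne
    have hc0 : c ⟨0, hh⟩ ≠ 0 := by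
      have hcval : c ⟨0, hh⟩ = (∑ i, Λ i * (n i : ℝ)) - ∑ i, Λ i * (n₀ i : ℝ) := by
        simp_rw [hcdef, hAΛ, ← Finset.sum_sub_distrib]
        exact Finset.sum_congr rfl fun i _ => by ring
      rw [hcval]
      exact sub_ne_zero_of_ne hne
    simp only [hrw, aux_fact]
    have hb : Tendsto (fun R : ℝ => (2 / |c ⟨0, hh⟩|) / (2 * R)) atTop (nhds 0) := by
      simp_rw [div_eq_mul_inv (2 / |c ⟨0, hh⟩|)]
      rw [show (0 : ℝ) = (2 / |c ⟨0, hh⟩|) * 0 by ring]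
      exact tendsto_const_nhds.mul
        ((tendsto_id.const_mul_atTop two_pos).inv_tendsto_atTop)
    refine squeeze_zero_norm' ?_ hb
    filter_upwards [eventually_gt_atTop (0 : ℝ)] with R hR
    have h2R : (0 : ℝ) < 2 * R := by linarith
    rw [norm_mul, norm_prod]
    have hnormc : ‖((1 / (2 * R) ^ h : ℝ) : ℂ)‖ = 1 / (2 * R) ^ h := by
      rw [Complex.norm_real, Real.norm_eq_abs, abs_of_pos (by positivity)]
    rw [hnormc]
    have hprod : (∏ j, ‖∫ t in Set.Icc (-R) R,
        Complex.exp (Complex.I * (c j : ℂ) * (t : ℂ))‖)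
        ≤ (2 / |c ⟨0, hh⟩|) * (2 * R) ^ (h - 1) := by
      rw [← Finset.mul_prod_erase Finset.univ _ (Finset.mem_univ ⟨0, hh⟩)]
      refine mul_le_mul (aux_norm_le' _ _ hc0 hR) ?_
        (Finset.prod_nonneg fun j _ => norm_nonneg _) (by positivity)
      calc (∏ j ∈ Finset.univ.erase ⟨0, hh⟩, ‖∫ t in Set.Icc (-R) R,
            Complex.exp (Complex.I * (c j : ℂ) * (t : ℂ))‖)
          ≤ ∏ _j ∈ Finset.univ.erase (⟨0, hh⟩ : Fin h), (2 * R) :=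
            Finset.prod_le_prod (fun j _ => norm_nonneg _) (fun j _ => aux_norm_le _ _ hR)
        _ = (2 * R) ^ (h - 1) := by
            rw [Finset.prod_const, Finset.card_erase_of_mem (Finset.mem_univ _),
              Finset.card_univ, Fintype.card_fin]
    calc (1 / (2 * R) ^ h) * ∏ j, ‖∫ t in Set.Icc (-R) R,
          Complex.exp (Complex.I * (c j : ℂ) * (t : ℂ))‖
        ≤ (1 / (2 * R) ^ h) * ((2 / |c ⟨0, hh⟩|) * (2 * R) ^ (h - 1)) :=
          mul_le_mul_of_nonneg_left hprod (by positivity)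
      _ = (2 / |c ⟨0, hh⟩|) / (2 * R) := by
          have hpow : (2 * R) ^ h = (2 * R) ^ (h - 1) * (2 * R) := by
            obtain ⟨m, rfl⟩ : ∃ m, h = m + 1 := ⟨h - 1, (Nat.succ_pred_eq_of_pos hh).symm⟩
            rw [pow_succ, Nat.add_sub_cancel]
          rw [hpow]
          have h1 : (2 * R) ^ (h - 1) ≠ 0 := by positivity
          have h2 : |c ⟨0, hh⟩| ≠ 0 := abs_ne_zero.mpr hc0
          field_simp
  · intro _ hortho R hR
    have hc0 : ∀ j, c j = 0 := by
      intro j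
      have := hortho (fun k => M k j)
      rw [hcdef]
      rw [← this]
      exact Finset.sum_congr rfl fun i _ => by rw [hAB]
    simp only [hrw, hc0, Complex.ofReal_zero, mul_zero, zero_mul, Complex.exp_zero,
      Finset.prod_const_one]
    rw [MeasureTheory.setIntegral_const]
    have hvol : volume (Set.univ.pi fun _ : Fin h => Set.Icc (-R) R)
        = ENNReal.ofReal (2 * R) ^ h := by
      rw [volume_pi_pi]
      simp only [Real.volume_Icc, sub_neg_eq_add]
      rw [Finset.prod_const, Finset.card_univ, Fintype.card_fin]
      congr 1
      ring_nf
    rw [measureReal_def, hvol]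
    have h2R : (0 : ℝ) < 2 * R := by linarith
    rw [ENNReal.toReal_pow, ENNReal.toReal_ofReal h2R.le, Complex.real_smul, mul_one,
      ← Complex.ofReal_mul]
    have hfin : (1 / (2 * R) ^ h : ℝ) * (2 * R) ^ h = 1 := by
      field_simp
    rw [hfin, Complex.ofReal_one]
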